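/- (Integration-by-parts identity (4.12).) Assume additionally A_θ, A_z ∈ C²(closure of E), u ∈ C²(closure of E; ℝ³), and u = 0 on ∂E. Then, noting 2F₂₃^sym − F₂₃ = F₃₂, one has (F₂₃, F₃₂)_E = ∫_E u_{θ,z} u_{z,θ} dθdz + ∫_E (A_{θ,z} A_{z,θ}/(A_θ A_z)) u_θ u_z dθdz + (1/2) ∫_E ∂_z(A_{θ,z}/A_z) u_θ² dθdz + (1/2) ∫_E ∂_θ(A_{z,θ}/A_θ) u_z² dθdz. -/

import Mathlib

open MeasureTheory Set Real

noncomputable section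

/-- Partial derivative in `θ` of a scalar function on the parameter plane `(θ, z)`. -/
def dTh (f : ℝ × ℝ → ℝ) (p : ℝ × ℝ) : ℝ := fderiv ℝ f p (1, 0)

/-- Partial derivative in `z` of a scalar function on the parameter plane `(θ, z)`. -/
def dZ (f : ℝ × ℝ → ℝ) (p : ℝ × ℝ) : ℝ := fderiv ℝ f p (0, 1)

/-- The two-dimensional data: the functions `z1, z2` determining the parameter domain `E`,
the metric coefficients `Ath = A_θ`, `Az = A_z`, the principal curvatures `kth = κ_θ`,
`kz = κ_z`, and the components `ut = u_t`, `uth = u_θ`, `uz = u_z` of a displacement. -/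
structure Setup2D where
  z1 : ℝ → ℝ
  z2 : ℝ → ℝ
  Ath : ℝ × ℝ → ℝ
  Az : ℝ × ℝ → ℝ
  kth : ℝ × ℝ → ℝ
  kz : ℝ × ℝ → ℝ
  ut : ℝ × ℝ → ℝ
  uth : ℝ × ℝ → ℝ
  uz : ℝ × ℝ → ℝ

namespace Setup2D

/-- The parameter domain `E = {(θ,z) : θ ∈ (0,1), z ∈ (z1 θ, z2 θ)}`. -/
def E (S : Setup2D) : Set (ℝ × ℝ) :=
  {p | p.1 ∈ Ioo (0 : ℝ) 1 ∧ p.2 ∈ Ioo (S.z1 p.1) (S.z2 p.1)}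

/-- The entry `F₂₂` of the simplified gradient. -/
def F22 (S : Setup2D) (p : ℝ × ℝ) : ℝ :=
  (S.Az p * dTh S.uth p + S.Az p * S.Ath p * S.kth p * S.ut p + dZ S.Ath p * S.uz p) /
    (S.Az p * S.Ath p)

/-- The entry `F₂₃` of the simplified gradient. -/
def F23 (S : Setup2D) (p : ℝ × ℝ) : ℝ :=
  (S.Ath p * dZ S.uth p - dTh S.Az p * S.uz p) / (S.Az p * S.Ath p)

/-- The entry `F₃₂` of the simplified gradient. -/
def F32 (S : Setup2D) (p : ℝ × ℝ) : ℝ :=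
  (S.Az p * dTh S.uz p - dZ S.Ath p * S.uth p) / (S.Az p * S.Ath p)

/-- The entry `F₃₃` of the simplified gradient. -/
def F33 (S : Setup2D) (p : ℝ × ℝ) : ℝ :=
  (S.Ath p * dZ S.uz p + S.Az p * S.Ath p * S.kz p * S.ut p + dTh S.Az p * S.uth p) /
    (S.Az p * S.Ath p)

/-- `F₂₃^sym = (F₂₃ + F₃₂)/2`. -/
def F23sym (S : Setup2D) (p : ℝ × ℝ) : ℝ := (S.F23 p + S.F32 p) / 2

/-- `|F^sym|² = F₂₂² + 2 (F₂₃^sym)² + F₃₃²`. -/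
def FsymSq (S : Setup2D) (p : ℝ × ℝ) : ℝ := S.F22 p ^ 2 + 2 * S.F23sym p ^ 2 + S.F33 p ^ 2

/-- The weighted inner product `(f, g)_E = ∫_E A_θ A_z f g dθ dz`. -/
def ip (S : Setup2D) (f g : ℝ × ℝ → ℝ) : ℝ := ∫ p in S.E, S.Ath p * S.Az p * f p * g p

/-- The weighted squared norm `‖f‖²_E`. -/
def nsq (S : Setup2D) (f : ℝ × ℝ → ℝ) : ℝ := S.ip f f

/-- The weighted squared norm `‖|F^sym|‖²_E` of the simplified symmetrized gradient. -/
def nF (S : Setup2D) : ℝ := ∫ p in S.E, S.Ath p * S.Az p * S.FsymSq p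

/-- The standing context: the form of the domain, the regularity `A_θ, A_z, κ_θ, κ_z ∈ C¹`,
positivity of `A_θ, A_z` on the closure of `E`, and `u ∈ C¹`. -/
def Base (S : Setup2D) : Prop :=
  (∀ θ ∈ Icc (0 : ℝ) 1, 0 ≤ S.z1 θ ∧ S.z1 θ < S.z2 θ ∧ S.z2 θ ≤ 1) ∧
  ContDiff ℝ 1 S.Ath ∧ ContDiff ℝ 1 S.Az ∧ ContDiff ℝ 1 S.kth ∧ ContDiff ℝ 1 S.kz ∧
  (∀ p ∈ closure S.E, 0 < S.Ath p ∧ 0 < S.Az p) ∧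
  ContDiff ℝ 1 S.ut ∧ ContDiff ℝ 1 S.uth ∧ ContDiff ℝ 1 S.uz

/-- The boundary condition `u = 0` on `∂E`. -/
def BZero (S : Setup2D) : Prop := ∀ p ∈ frontier S.E, S.ut p = 0 ∧ S.uth p = 0 ∧ S.uz p = 0

/-- The additional `C²` regularity of `A_θ, A_z` and `u`. -/
def Csq (S : Setup2D) : Prop :=
  ContDiff ℝ 2 S.Ath ∧ ContDiff ℝ 2 S.Az ∧
  ContDiff ℝ 2 S.ut ∧ ContDiff ℝ 2 S.uth ∧ ContDiff ℝ 2 S.uz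

/-- The Codazzi–Gauss identity `∂_z(A_{θ,z}/A_z) + ∂_θ(A_{z,θ}/A_θ) = -A_z A_θ κ_z κ_θ`. -/
def CodazziGauss (S : Setup2D) : Prop :=
  ∀ p ∈ S.E,
    dZ (fun q => dZ S.Ath q / S.Az q) p + dTh (fun q => dTh S.Az q / S.Ath q) p =
      -(S.Az p * S.Ath p * S.kz p * S.kth p)

/-- The uniform bounds `a ≤ A_θ, A_z ≤ A` and `|∇A_θ| + |∇A_z| ≤ B` on the closure of `E`. -/
def Bounds (S : Setup2D) (a A B : ℝ) : Prop :=
  ∀ p ∈ closure S.E, a ≤ S.Ath p ∧ S.Ath p ≤ A ∧ a ≤ S.Az p ∧ S.Az p ≤ A ∧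
    ‖fderiv ℝ S.Ath p‖ + ‖fderiv ℝ S.Az p‖ ≤ B

/-- `ρ` satisfies `κ_z = ρ κ_θ` with `ρ₀ ≤ ρ ≤ ρ₁` and `|∇ρ| ≤ c2`. -/
def RhoHyp (S : Setup2D) (ρ : ℝ × ℝ → ℝ) (ρ0 ρ1 c2 : ℝ) : Prop :=
  ContDiff ℝ 1 ρ ∧ (∀ p ∈ S.E, S.kz p = ρ p * S.kth p) ∧
  (∀ p ∈ closure S.E, ρ0 ≤ ρ p ∧ ρ p ≤ ρ1 ∧ ‖fderiv ℝ ρ p‖ ≤ c2)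

/-- Nonnegativity of the curvatures and the comparability condition
`(1/c)√(κ_θ κ_z) ≤ κ_θ, κ_z ≤ c √(κ_θ κ_z)` on `E`. -/
def Comparable (S : Setup2D) (c : ℝ) : Prop :=
  ∀ p ∈ S.E, 0 ≤ S.kth p ∧ 0 ≤ S.kz p ∧
    c⁻¹ * Real.sqrt (S.kth p * S.kz p) ≤ S.kth p ∧
    S.kth p ≤ c * Real.sqrt (S.kth p * S.kz p) ∧
    c⁻¹ * Real.sqrt (S.kth p * S.kz p) ≤ S.kz p ∧
    S.kz p ≤ c * Real.sqrt (S.kth p * S.kz p)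

end Setup2D

open Asymptotics in
lemma aux_ext_integral_fderiv_zero {K V : Set (ℝ × ℝ)} (hK : IsCompact K) (hKc : IsClosed K)
    (hKV : K ⊆ V) {G : ℝ × ℝ → ℝ}
    (hGd : ∀ p ∈ V, DifferentiableAt ℝ G p)
    (hGc : ContinuousOn (fderiv ℝ G) V)
    (hfr : ∀ p ∈ frontier K, G p = 0 ∧ fderiv ℝ G p = 0) (v : ℝ × ℝ) :
    ∫ p, K.indicator (fun q => fderiv ℝ G q v) p = 0 := by
  classical
  set H : ℝ × ℝ → ℝ := K.indicator G with hH
  set D : ℝ × ℝ → (ℝ × ℝ) →L[ℝ] ℝ := K.indicator (fderiv ℝ G) with hD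
  have hDv : (fun p => D p v) = K.indicator (fun q => fderiv ℝ G q v) := by
    funext p
    by_cases hp : p ∈ K <;> simp [hD, Set.indicator, hp]
  have hHd : ∀ p, HasFDerivAt H (D p) p := by
    intro p
    by_cases hpK : p ∈ K
    · by_cases hpi : p ∈ interior K
      · have hev : H =ᶠ[nhds p] G :=
          Filter.eventually_of_mem (isOpen_interior.mem_nhds hpi)
            (fun q hq => Set.indicator_of_mem (interior_subset hq) G)
        have hg : HasFDerivAt G (fderiv ℝ G p) p := (hGd p (hKV hpK)).hasFDerivAt
        have hDp : D p = fderiv ℝ G p := Set.indicator_of_mem hpK _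
        rw [hDp]
        exact hg.congr_of_eventuallyEq hev
      · have hpf : p ∈ frontier K := ⟨by rwa [hKc.closure_eq], hpi⟩
        obtain ⟨hG0, hD0⟩ := hfr p hpf
        have hDp : D p = 0 := by rw [hD]; simp [Set.indicator_of_mem hpK, hD0]
        rw [hDp]
        have hg : HasFDerivAt G (0 : (ℝ × ℝ) →L[ℝ] ℝ) p := by
          have := (hGd p (hKV hpK)).hasFDerivAt
          rwa [hD0] at this
        have hHp : H p = 0 := by rw [hH]; simp [Set.indicator_of_mem hpK, hG0]
        rw [hasFDerivAt_iff_isLittleO_nhds_zero]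
        have hGlit := hasFDerivAt_iff_isLittleO_nhds_zero.1 hg
        refine IsBigO.trans_isLittleO (isBigO_of_le _ (fun h => ?_)) hGlit
        simp only [hHp, hG0, ContinuousLinearMap.zero_apply, sub_zero]
        by_cases hq : p + h ∈ K
        · simp [hH, Set.indicator_of_mem hq]
        · simp [hH, Set.indicator_of_notMem hq, abs_nonneg]
    · have hev : H =ᶠ[nhds p] (fun _ => (0 : ℝ)) :=
        Filter.eventually_of_mem (hKc.isOpen_compl.mem_nhds hpK)
          (fun q hq => Set.indicator_of_notMem hq G)
      have hDp : D p = 0 := Set.indicator_of_notMem hpK _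
      rw [hDp]
      exact (hasFDerivAt_const (0 : ℝ) p).congr_of_eventuallyEq hev
  have hGK : ContinuousOn G K := fun p hp => ((hGd p (hKV hp)).continuousAt).continuousWithinAt
  have hintH : Integrable H := by
    rw [hH, integrable_indicator_iff hKc.measurableSet]
    exact hGK.integrableOn_compact hK
  have hintDv : Integrable (fun p => D p v) := by
    rw [hDv, integrable_indicator_iff hKc.measurableSet]
    exact (((hGc.mono hKV).clm_apply continuousOn_const).integrableOn_compact hK)
  have key := integral_bilinear_hasFDerivAt_right_eq_neg_left_of_integrable
    (μ := (volume : Measure (ℝ × ℝ))) (B := ContinuousLinearMap.mul ℝ ℝ) (v := v)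
    (f := fun _ => (1 : ℝ)) (f' := fun _ => 0) (g := H) (g' := D)
    (by simpa using (integrable_zero _ _ _)) (by simpa using hintDv) (by simpa using hintH)
    (fun x _ => hasFDerivAt_const (1:ℝ) x) (fun x _ => hHd x)
  simp only [ContinuousLinearMap.mul_apply', one_mul, ContinuousLinearMap.zero_apply,
    zero_mul, integral_zero, neg_zero] at key
  rw [← hDv]
  exact key


set_option maxHeartbeats 1000000 in
theorem ibp_identity_offdiag (S : Setup2D) (hBase : S.Base) (hC2 : S.Csq) (hB0 : S.BZero) :
    S.ip S.F23 S.F32 =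
      (∫ p in S.E, dZ S.uth p * dTh S.uz p) +
      (∫ p in S.E, dZ S.Ath p * dTh S.Az p / (S.Ath p * S.Az p) * (S.uth p * S.uz p)) +
      (1 / 2) * (∫ p in S.E, dZ (fun q => dZ S.Ath q / S.Az q) p * S.uth p ^ 2) +
      (1 / 2) * (∫ p in S.E, dTh (fun q => dTh S.Az q / S.Ath q) p * S.uz p ^ 2) := by
  classical
  obtain ⟨hz, hAth1, hAz1, -, -, hpos, -, -, -⟩ := hBase
  obtain ⟨hAth2, hAz2, -, huth2, huz2⟩ := hC2
  -- basic topology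
  set K := closure S.E with hKdef
  have hEbox : S.E ⊆ Icc ((0:ℝ), (0:ℝ)) (1, 1) := by
    rintro ⟨θ, z⟩ ⟨hθ, hzz⟩
    obtain ⟨h1, h2, h3⟩ := hz θ ⟨le_of_lt hθ.1, le_of_lt hθ.2⟩
    simp only [Set.mem_Icc, Prod.le_def]
    exact ⟨⟨le_of_lt hθ.1, le_trans h1 (le_of_lt hzz.1)⟩,
      ⟨le_of_lt hθ.2, le_trans (le_of_lt hzz.2) h3⟩⟩
  have hKc : IsClosed K := isClosed_closure
  have hKbox : K ⊆ Icc ((0:ℝ), (0:ℝ)) (1, 1) := closure_minimal hEbox isClosed_Icc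
  have hKcomp : IsCompact K := IsCompact.of_isClosed_subset isCompact_Icc hKc hKbox
  set V : Set (ℝ × ℝ) := {p | 0 < S.Ath p ∧ 0 < S.Az p} with hVdef
  have hVopen : IsOpen V := by
    have : V = S.Ath ⁻¹' Ioi 0 ∩ S.Az ⁻¹' Ioi 0 := rfl
    rw [this]
    exact (isOpen_Ioi.preimage hAth1.continuous).inter (isOpen_Ioi.preimage hAz1.continuous)
  have hKV : K ⊆ V := fun p hp => hpos p hp
  have hfrE : ∀ p ∈ frontier S.E, S.uth p = 0 ∧ S.uz p = 0 :=
    fun p hp => ⟨(hB0 p hp).2.1, (hB0 p hp).2.2⟩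
  have hfrEK : frontier S.E ⊆ K := frontier_subset_closure
  -- C¹ facts on derivative components
  have h12 : (1 : WithTop ℕ∞) + 1 ≤ 2 := by norm_num
  have hdAth : ContDiff ℝ 1 (fderiv ℝ S.Ath) := hAth2.fderiv_right h12
  have hdAz : ContDiff ℝ 1 (fderiv ℝ S.Az) := hAz2.fderiv_right h12
  have hdZAth : ContDiff ℝ 1 (fun p => dZ S.Ath p) :=
    (ContinuousLinearMap.apply ℝ ℝ ((0:ℝ), (1:ℝ))).contDiff.comp hdAth
  have hdThAz : ContDiff ℝ 1 (fun p => dTh S.Az p) :=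
    (ContinuousLinearMap.apply ℝ ℝ ((1:ℝ), (0:ℝ))).contDiff.comp hdAz
  have huthd : Differentiable ℝ S.uth := huth2.differentiable two_ne_zero
  have huzd : Differentiable ℝ S.uz := huz2.differentiable two_ne_zero
  have cuth : Continuous S.uth := huth2.continuous
  have cuz : Continuous S.uz := huz2.continuous
  have cdZuth : Continuous (fun p => dZ S.uth p) :=
    ((huth2.fderiv_right h12).continuous).clm_apply continuous_const
  have cdThuz : Continuous (fun p => dTh S.uz p) :=
    ((huz2.fderiv_right h12).continuous).clm_apply continuous_const
  -- the two quotient functions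
  set h1 : ℝ × ℝ → ℝ := fun q => dZ S.Ath q / S.Az q with hh1def
  set h2 : ℝ × ℝ → ℝ := fun q => dTh S.Az q / S.Ath q with hh2def
  have hh1cd : ContDiffOn ℝ 1 h1 V := by
    rw [hh1def]
    exact ContDiffOn.div hdZAth.contDiffOn hAz1.contDiffOn (fun p hp => ne_of_gt hp.2)
  have hh2cd : ContDiffOn ℝ 1 h2 V := by
    rw [hh2def]
    exact ContDiffOn.div hdThAz.contDiffOn hAth1.contDiffOn (fun p hp => ne_of_gt hp.1)
  have hh1d : ∀ p ∈ V, DifferentiableAt ℝ h1 p := fun p hp =>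
    (hh1cd.differentiableOn one_ne_zero).differentiableAt (hVopen.mem_nhds hp)
  have hh2d : ∀ p ∈ V, DifferentiableAt ℝ h2 p := fun p hp =>
    (hh2cd.differentiableOn one_ne_zero).differentiableAt (hVopen.mem_nhds hp)
  have hh1fc : ContinuousOn (fderiv ℝ h1) V := hh1cd.continuousOn_fderiv_of_isOpen hVopen le_rfl
  have hh2fc : ContinuousOn (fderiv ℝ h2) V := hh2cd.continuousOn_fderiv_of_isOpen hVopen le_rfl
  -- the correction functions G1, G2
  set G1 : ℝ × ℝ → ℝ := fun q => (-(1:ℝ)/2) * (h1 q * (S.uth q * S.uth q)) with hG1def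
  set G2 : ℝ × ℝ → ℝ := fun q => (-(1:ℝ)/2) * (h2 q * (S.uz q * S.uz q)) with hG2def
  have hG1d : ∀ p ∈ V, HasFDerivAt G1
      ((-(1:ℝ)/2) • (h1 p • (S.uth p • fderiv ℝ S.uth p + S.uth p • fderiv ℝ S.uth p) +
        (S.uth p * S.uth p) • fderiv ℝ h1 p)) p := by
    intro p hp
    rw [hG1def]
    exact (((hh1d p hp).hasFDerivAt.mul
      ((huthd p).hasFDerivAt.mul (huthd p).hasFDerivAt)).const_mul _)
  have hG2d : ∀ p ∈ V, HasFDerivAt G2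
      ((-(1:ℝ)/2) • (h2 p • (S.uz p • fderiv ℝ S.uz p + S.uz p • fderiv ℝ S.uz p) +
        (S.uz p * S.uz p) • fderiv ℝ h2 p)) p := by
    intro p hp
    rw [hG2def]
    exact (((hh2d p hp).hasFDerivAt.mul
      ((huzd p).hasFDerivAt.mul (huzd p).hasFDerivAt)).const_mul _)
  have hG1dd : ∀ p ∈ V, DifferentiableAt ℝ G1 p := fun p hp => (hG1d p hp).differentiableAt
  have hG2dd : ∀ p ∈ V, DifferentiableAt ℝ G2 p := fun p hp => (hG2d p hp).differentiableAt
  have hG1cd : ContDiffOn ℝ 1 G1 V := by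
    rw [hG1def]
    exact contDiffOn_const.mul (hh1cd.mul (((huth2.of_le one_le_two).contDiffOn).mul
      ((huth2.of_le one_le_two).contDiffOn)))
  have hG2cd : ContDiffOn ℝ 1 G2 V := by
    rw [hG2def]
    exact contDiffOn_const.mul (hh2cd.mul (((huz2.of_le one_le_two).contDiffOn).mul
      ((huz2.of_le one_le_two).contDiffOn)))
  have hG1fc : ContinuousOn (fderiv ℝ G1) V := hG1cd.continuousOn_fderiv_of_isOpen hVopen le_rfl
  have hG2fc : ContinuousOn (fderiv ℝ G2) V := hG2cd.continuousOn_fderiv_of_isOpen hVopen le_rfl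
  have hG1fr : ∀ p ∈ frontier S.E, G1 p = 0 ∧ fderiv ℝ G1 p = 0 := by
    intro p hp
    have hu0 : S.uth p = 0 := (hfrE p hp).1
    have hpV : p ∈ V := hKV (hfrEK hp)
    refine ⟨by simp [hG1def, hu0], ?_⟩
    rw [(hG1d p hpV).fderiv, hu0]
    simp
  have hG2fr : ∀ p ∈ frontier S.E, G2 p = 0 ∧ fderiv ℝ G2 p = 0 := by
    intro p hp
    have hu0 : S.uz p = 0 := (hfrE p hp).2
    have hpV : p ∈ V := hKV (hfrEK hp)
    refine ⟨by simp [hG2def, hu0], ?_⟩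
    rw [(hG2d p hpV).fderiv, hu0]
    simp
  -- the measurable hull E'
  have hEfin : volume S.E ≠ ⊤ :=
    ne_of_lt (lt_of_le_of_lt (measure_mono hEbox) isCompact_Icc.measure_lt_top)
  set T := toMeasurable volume S.E with hTdef
  have hTm : MeasurableSet T := measurableSet_toMeasurable _ _
  set E' := T ∩ K with hE'def
  have hE'm : MeasurableSet E' := hTm.inter hKc.measurableSet
  have hEE' : S.E ⊆ E' := subset_inter (subset_toMeasurable _ _) subset_closure
  have hE'K : E' ⊆ K := inter_subset_right
  have hE'T : E' ⊆ T := inter_subset_left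
  have hE'fin : volume E' ≠ ⊤ := by
    refine ne_of_lt (lt_of_le_of_lt
      (measure_mono (h := hE'K.trans hKbox))
      isCompact_Icc.measure_lt_top)
  have hres : volume.restrict S.E = volume.restrict E' := by
    have hTE : volume.restrict T = volume.restrict S.E := Measure.restrict_toMeasurable hEfin
    have hμ : volume (T \ E') = 0 := by
      have h1 : volume E' ≤ volume T := measure_mono hE'T
      have h2 : volume T ≤ volume E' := by
        rw [measure_toMeasurable]
        exact measure_mono hEE'
      have := measure_diff hE'T hE'm.nullMeasurableSet hE'fin
      rw [this, le_antisymm h1 h2]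
      simp
    have hae : T =ᶠ[ae volume] E' := by
      rw [ae_eq_set]
      exact ⟨hμ, by simp [diff_eq_empty.2 hE'T]⟩
    rw [← hTE, Measure.restrict_congr_set hae]
  -- frontier vanishing off E'
  have hcompl1 : ∀ p, p ∉ E' → K.indicator (fun q => fderiv ℝ G1 q (0, 1)) p = 0 := by
    intro p hp
    by_cases hpK : p ∈ K
    · have hpf : p ∈ frontier S.E := by
        refine ⟨hpK, fun hint => hp (hEE' (interior_subset hint))⟩
      rw [Set.indicator_of_mem hpK, (hG1fr p hpf).2]
      simp
    · exact Set.indicator_of_notMem hpK _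
  have hcompl2 : ∀ p, p ∉ E' → K.indicator (fun q => fderiv ℝ G2 q (1, 0)) p = 0 := by
    intro p hp
    by_cases hpK : p ∈ K
    · have hpf : p ∈ frontier S.E := by
        refine ⟨hpK, fun hint => hp (hEE' (interior_subset hint))⟩
      rw [Set.indicator_of_mem hpK, (hG2fr p hpf).2]
      simp
    · exact Set.indicator_of_notMem hpK _
  -- the zero integrals
  have hfrK1 : ∀ p ∈ frontier K, G1 p = 0 ∧ fderiv ℝ G1 p = 0 :=
    fun p hp => hG1fr p (frontier_closure_subset hp)
  have hfrK2 : ∀ p ∈ frontier K, G2 p = 0 ∧ fderiv ℝ G2 p = 0 :=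
    fun p hp => hG2fr p (frontier_closure_subset hp)
  have hJ1zero : ∫ p in E', fderiv ℝ G1 p (0, 1) = 0 := by
    have e1 : ∫ p in E', fderiv ℝ G1 p (0, 1) =
        ∫ p in E', K.indicator (fun q => fderiv ℝ G1 q (0, 1)) p :=
      setIntegral_congr_fun hE'm (fun p hp =>
        (Set.indicator_of_mem (hE'K hp) (fun q => fderiv ℝ G1 q (0, 1))).symm)
    rw [e1, setIntegral_eq_integral_of_forall_compl_eq_zero hcompl1]
    exact aux_ext_integral_fderiv_zero hKcomp hKc hKV hG1dd hG1fc hfrK1 _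
  have hJ2zero : ∫ p in E', fderiv ℝ G2 p (1, 0) = 0 := by
    have e1 : ∫ p in E', fderiv ℝ G2 p (1, 0) =
        ∫ p in E', K.indicator (fun q => fderiv ℝ G2 q (1, 0)) p :=
      setIntegral_congr_fun hE'm (fun p hp =>
        (Set.indicator_of_mem (hE'K hp) (fun q => fderiv ℝ G2 q (1, 0))).symm)
    rw [e1, setIntegral_eq_integral_of_forall_compl_eq_zero hcompl2]
    exact aux_ext_integral_fderiv_zero hKcomp hKc hKV hG2dd hG2fc hfrK2 _
  -- integrability of the pieces
  have hci : ∀ {f : ℝ × ℝ → ℝ}, ContinuousOn f V → IntegrableOn f E' volume := fun hf =>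
    ((hf.mono hKV).integrableOn_compact hKcomp).mono_set hE'K
  have hi1 : IntegrableOn (fun p => dZ S.uth p * dTh S.uz p) E' volume :=
    hci (cdZuth.mul cdThuz).continuousOn
  have hi2 : IntegrableOn
      (fun p => dZ S.Ath p * dTh S.Az p / (S.Ath p * S.Az p) * (S.uth p * S.uz p)) E' volume := by
    refine hci (ContinuousOn.mul (ContinuousOn.div ?_ ?_ ?_) ?_)
    · exact (hdZAth.continuous.mul hdThAz.continuous).continuousOn
    · exact (hAth1.continuous.mul hAz1.continuous).continuousOn
    · exact fun p hp => ne_of_gt (mul_pos hp.1 hp.2)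
    · exact (cuth.mul cuz).continuousOn
  have hi3 : IntegrableOn (fun p => (1/2 : ℝ) * (dZ h1 p * S.uth p ^ 2)) E' volume := by
    refine hci (continuousOn_const.mul (ContinuousOn.mul ?_ ?_))
    · exact hh1fc.clm_apply continuousOn_const
    · exact (cuth.pow 2).continuousOn
  have hi4 : IntegrableOn (fun p => (1/2 : ℝ) * (dTh h2 p * S.uz p ^ 2)) E' volume := by
    refine hci (continuousOn_const.mul (ContinuousOn.mul ?_ ?_))
    · exact hh2fc.clm_apply continuousOn_const
    · exact (cuz.pow 2).continuousOn
  have hiJ1 : IntegrableOn (fun p => fderiv ℝ G1 p (0, 1)) E' volume :=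
    hci (hG1fc.clm_apply continuousOn_const)
  have hiJ2 : IntegrableOn (fun p => fderiv ℝ G2 p (1, 0)) E' volume :=
    hci (hG2fc.clm_apply continuousOn_const)
  -- the pointwise identity
  have key : ∀ p ∈ E', S.Ath p * S.Az p * S.F23 p * S.F32 p =
      dZ S.uth p * dTh S.uz p +
      dZ S.Ath p * dTh S.Az p / (S.Ath p * S.Az p) * (S.uth p * S.uz p) +
      (1/2 : ℝ) * (dZ h1 p * S.uth p ^ 2) + (1/2 : ℝ) * (dTh h2 p * S.uz p ^ 2) +
      fderiv ℝ G1 p (0, 1) + fderiv ℝ G2 p (1, 0) := by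
    intro p hp
    have hpV : p ∈ V := hKV (hE'K hp)
    have hA : S.Ath p ≠ 0 := ne_of_gt hpV.1
    have hB : S.Az p ≠ 0 := ne_of_gt hpV.2
    have hJ1p : fderiv ℝ G1 p (0, 1) =
        (-(1:ℝ)/2) * (h1 p * (S.uth p * dZ S.uth p + S.uth p * dZ S.uth p) +
          (S.uth p * S.uth p) * dZ h1 p) := by
      rw [(hG1d p hpV).fderiv]
      simp only [ContinuousLinearMap.coe_smul', Pi.smul_apply, ContinuousLinearMap.add_apply,
        ContinuousLinearMap.smul_apply, smul_eq_mul]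
      unfold dZ
      ring
    have hJ2p : fderiv ℝ G2 p (1, 0) =
        (-(1:ℝ)/2) * (h2 p * (S.uz p * dTh S.uz p + S.uz p * dTh S.uz p) +
          (S.uz p * S.uz p) * dTh h2 p) := by
      rw [(hG2d p hpV).fderiv]
      simp only [ContinuousLinearMap.coe_smul', Pi.smul_apply, ContinuousLinearMap.add_apply,
        ContinuousLinearMap.smul_apply, smul_eq_mul]
      unfold dTh
      ring
    rw [hJ1p, hJ2p]
    simp only [Setup2D.F23, Setup2D.F32, hh1def, hh2def]
    set x1 := S.Ath p
    set x2 := S.Az p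
    set x3 := dZ S.uth p
    set x4 := dTh S.uz p
    set x5 := dZ S.Ath p
    set x6 := dTh S.Az p
    set x7 := S.uth p
    set x8 := S.uz p
    set x9 := dZ (fun q => dZ S.Ath q / S.Az q) p
    set x10 := dTh (fun q => dTh S.Az q / S.Ath q) p
    field_simp
    ring
  -- put it together
  show (∫ p in S.E, S.Ath p * S.Az p * S.F23 p * S.F32 p) = _
  rw [hres]
  rw [setIntegral_congr_fun hE'm key]
  have hs2 : IntegrableOn (fun p => dZ S.uth p * dTh S.uz p +
      dZ S.Ath p * dTh S.Az p / (S.Ath p * S.Az p) * (S.uth p * S.uz p)) E' volume :=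
    hi1.add hi2
  have hs3 : IntegrableOn (fun p => dZ S.uth p * dTh S.uz p +
      dZ S.Ath p * dTh S.Az p / (S.Ath p * S.Az p) * (S.uth p * S.uz p) +
      (1/2 : ℝ) * (dZ h1 p * S.uth p ^ 2)) E' volume := hs2.add hi3
  have hs4 : IntegrableOn (fun p => dZ S.uth p * dTh S.uz p +
      dZ S.Ath p * dTh S.Az p / (S.Ath p * S.Az p) * (S.uth p * S.uz p) +
      (1/2 : ℝ) * (dZ h1 p * S.uth p ^ 2) +
      (1/2 : ℝ) * (dTh h2 p * S.uz p ^ 2)) E' volume := hs3.add hi4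
  have hs5 : IntegrableOn (fun p => dZ S.uth p * dTh S.uz p +
      dZ S.Ath p * dTh S.Az p / (S.Ath p * S.Az p) * (S.uth p * S.uz p) +
      (1/2 : ℝ) * (dZ h1 p * S.uth p ^ 2) +
      (1/2 : ℝ) * (dTh h2 p * S.uz p ^ 2) +
      fderiv ℝ G1 p (0, 1)) E' volume := hs4.add hiJ1
  rw [integral_add hs5 hiJ2, integral_add hs4 hiJ1, integral_add hs3 hi4,
    integral_add hs2 hi3, integral_add hi1 hi2,
    hJ1zero, hJ2zero, add_zero, add_zero, integral_const_mul, integral_const_mul]
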